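/- Let u be a twice continuously differentiable real-valued function and σ a positive twice differentiable function on a domain of ℝ³. Define the purely vectorial quaternion E⃗ = −√σ·grad u and σ⃗ = (grad √σ)/√σ. Then div(σ grad u) = 0 if and only if (D + M^σ⃗)E⃗ = 0, where M^σ⃗ denotes right multiplication by σ⃗ and D is the Moisil-Theodoresco operator. -/

import Mathlib

open Quaternion

def e1 : Quaternion ℝ := ⟨0, 1, 0, 0⟩
def e2 : Quaternion ℝ := ⟨0, 0, 1, 0⟩
def e3 : Quaternion ℝ := ⟨0, 0, 0, 1⟩

/-- The Moisil-Theodoresco operator `D = e₁∂₁ + e₂∂₂ + e₃∂₃` (left multiplication). -/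
noncomputable def MT (Q : ℝ → ℝ → ℝ → Quaternion ℝ) (x₁ x₂ x₃ : ℝ) : Quaternion ℝ :=
  e1 * deriv (fun t => Q t x₂ x₃) x₁ + e2 * deriv (fun t => Q x₁ t x₃) x₂ +
    e3 * deriv (fun t => Q x₁ x₂ t) x₃

noncomputable def pd1 (f : ℝ → ℝ → ℝ → ℝ) (x₁ x₂ x₃ : ℝ) : ℝ := deriv (fun t => f t x₂ x₃) x₁
noncomputable def pd2 (f : ℝ → ℝ → ℝ → ℝ) (x₁ x₂ x₃ : ℝ) : ℝ := deriv (fun t => f x₁ t x₃) x₂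
noncomputable def pd3 (f : ℝ → ℝ → ℝ → ℝ) (x₁ x₂ x₃ : ℝ) : ℝ := deriv (fun t => f x₁ x₂ t) x₃

section Aux

def unc (f : ℝ → ℝ → ℝ → ℝ) : ℝ × ℝ × ℝ → ℝ := fun p => f p.1 p.2.1 p.2.2

variable {f : ℝ → ℝ → ℝ → ℝ} {φ : ℝ × ℝ × ℝ →L[ℝ] ℝ} {a b c : ℝ}

lemma hasDerivAt_slice1 (h : HasFDerivAt (unc f) φ (a, b, c)) :
    HasDerivAt (fun t => f t b c) (φ (1, 0, 0)) a := by
  have h1 : HasDerivAt (fun t : ℝ => (t, b, c)) ((1:ℝ), (0:ℝ), (0:ℝ)) a :=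
    (hasDerivAt_id a).prodMk ((hasDerivAt_const a b).prodMk (hasDerivAt_const a c))
  exact h.comp_hasDerivAt a h1

lemma hasDerivAt_slice2 (h : HasFDerivAt (unc f) φ (a, b, c)) :
    HasDerivAt (fun t => f a t c) (φ (0, 1, 0)) b := by
  have h1 : HasDerivAt (fun t : ℝ => (a, t, c)) ((0:ℝ), (1:ℝ), (0:ℝ)) b :=
    (hasDerivAt_const b a).prodMk ((hasDerivAt_id b).prodMk (hasDerivAt_const b c))
  exact h.comp_hasDerivAt b h1

lemma hasDerivAt_slice3 (h : HasFDerivAt (unc f) φ (a, b, c)) :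
    HasDerivAt (fun t => f a b t) (φ (0, 0, 1)) c := by
  have h1 : HasDerivAt (fun t : ℝ => (a, b, t)) ((0:ℝ), (0:ℝ), (1:ℝ)) c :=
    (hasDerivAt_const c a).prodMk ((hasDerivAt_const c b).prodMk (hasDerivAt_id c))
  exact h.comp_hasDerivAt c h1

lemma pd1_eq (h : HasFDerivAt (unc f) φ (a, b, c)) : pd1 f a b c = φ (1, 0, 0) :=
  (hasDerivAt_slice1 h).deriv

lemma pd2_eq (h : HasFDerivAt (unc f) φ (a, b, c)) : pd2 f a b c = φ (0, 1, 0) :=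
  (hasDerivAt_slice2 h).deriv

lemma pd3_eq (h : HasFDerivAt (unc f) φ (a, b, c)) : pd3 f a b c = φ (0, 0, 1) :=
  (hasDerivAt_slice3 h).deriv

lemma hasDerivAt_pd1 (h : DifferentiableAt ℝ (unc f) (a, b, c)) :
    HasDerivAt (fun t => f t b c) (pd1 f a b c) a :=
  (hasDerivAt_slice1 h.hasFDerivAt).congr_deriv (pd1_eq h.hasFDerivAt).symm

lemma hasDerivAt_pd2 (h : DifferentiableAt ℝ (unc f) (a, b, c)) :
    HasDerivAt (fun t => f a t c) (pd2 f a b c) b :=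
  (hasDerivAt_slice2 h.hasFDerivAt).congr_deriv (pd2_eq h.hasFDerivAt).symm

lemma hasDerivAt_pd3 (h : DifferentiableAt ℝ (unc f) (a, b, c)) :
    HasDerivAt (fun t => f a b t) (pd3 f a b c) c :=
  (hasDerivAt_slice3 h.hasFDerivAt).congr_deriv (pd3_eq h.hasFDerivAt).symm

lemma contDiff_pd1 (hf : ContDiff ℝ 2 (unc f)) : ContDiff ℝ 1 (unc (pd1 f)) := by
  have hd : Differentiable ℝ (unc f) := hf.differentiable (by norm_num)
  have h : unc (pd1 f) = fun p => fderiv ℝ (unc f) p (1, 0, 0) := by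
    funext p
    obtain ⟨x, y, z⟩ := p
    exact pd1_eq (hd (x, y, z)).hasFDerivAt
  rw [h]
  exact (hf.fderiv_right (by norm_num)).clm_apply contDiff_const

lemma contDiff_pd2 (hf : ContDiff ℝ 2 (unc f)) : ContDiff ℝ 1 (unc (pd2 f)) := by
  have hd : Differentiable ℝ (unc f) := hf.differentiable (by norm_num)
  have h : unc (pd2 f) = fun p => fderiv ℝ (unc f) p (0, 1, 0) := by
    funext p
    obtain ⟨x, y, z⟩ := p
    exact pd2_eq (hd (x, y, z)).hasFDerivAt
  rw [h]
  exact (hf.fderiv_right (by norm_num)).clm_apply contDiff_const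

lemma contDiff_pd3 (hf : ContDiff ℝ 2 (unc f)) : ContDiff ℝ 1 (unc (pd3 f)) := by
  have hd : Differentiable ℝ (unc f) := hf.differentiable (by norm_num)
  have h : unc (pd3 f) = fun p => fderiv ℝ (unc f) p (0, 0, 1) := by
    funext p
    obtain ⟨x, y, z⟩ := p
    exact pd3_eq (hd (x, y, z)).hasFDerivAt
  rw [h]
  exact (hf.fderiv_right (by norm_num)).clm_apply contDiff_const

lemma second_sym (hf : ContDiff ℝ 2 (unc f)) (v w : ℝ × ℝ × ℝ) (p : ℝ × ℝ × ℝ) :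
    fderiv ℝ (fderiv ℝ (unc f)) p v w = fderiv ℝ (fderiv ℝ (unc f)) p w v := by
  have hd : Differentiable ℝ (unc f) := hf.differentiable (by norm_num)
  have hderiv : ∀ y, HasFDerivAt (unc f) (fderiv ℝ (unc f) y) y := fun y => (hd y).hasFDerivAt
  have hf' : ContDiff ℝ 1 (fderiv ℝ (unc f)) := hf.fderiv_right (by norm_num)
  have hx : HasFDerivAt (fderiv ℝ (unc f)) (fderiv ℝ (fderiv ℝ (unc f)) p) p :=
    ((hf'.differentiable (by norm_num)) p).hasFDerivAt
  exact second_derivative_symmetric hderiv hx v w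

lemma clairaut_aux (hf : ContDiff ℝ 2 (unc f)) (v : ℝ × ℝ × ℝ) (a b c : ℝ) :
    HasFDerivAt (unc (fun x y z => fderiv ℝ (unc f) (x, y, z) v))
      ((ContinuousLinearMap.apply ℝ ℝ v).comp (fderiv ℝ (fderiv ℝ (unc f)) (a, b, c)))
      (a, b, c) := by
  have hf' : ContDiff ℝ 1 (fderiv ℝ (unc f)) := hf.fderiv_right (by norm_num)
  have hx : HasFDerivAt (fderiv ℝ (unc f)) (fderiv ℝ (fderiv ℝ (unc f)) (a, b, c)) (a, b, c) :=
    ((hf'.differentiable (by norm_num)) (a, b, c)).hasFDerivAt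
  exact (ContinuousLinearMap.apply ℝ ℝ v).hasFDerivAt.comp (a, b, c) hx

lemma clairaut23 (hf : ContDiff ℝ 2 (unc f)) (a b c : ℝ) :
    pd2 (pd3 f) a b c = pd3 (pd2 f) a b c := by
  have hd : Differentiable ℝ (unc f) := hf.differentiable (by norm_num)
  have h3 : pd3 f = fun x y z => fderiv ℝ (unc f) (x, y, z) (0, 0, 1) := by
    funext x y z; exact pd3_eq (hd (x, y, z)).hasFDerivAt
  have h2 : pd2 f = fun x y z => fderiv ℝ (unc f) (x, y, z) (0, 1, 0) := by
    funext x y z; exact pd2_eq (hd (x, y, z)).hasFDerivAt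
  rw [h3, h2]
  rw [pd2_eq (clairaut_aux hf (0, 0, 1) a b c), pd3_eq (clairaut_aux hf (0, 1, 0) a b c)]
  exact second_sym hf _ _ _

lemma clairaut12 (hf : ContDiff ℝ 2 (unc f)) (a b c : ℝ) :
    pd1 (pd2 f) a b c = pd2 (pd1 f) a b c := by
  have hd : Differentiable ℝ (unc f) := hf.differentiable (by norm_num)
  have h1 : pd1 f = fun x y z => fderiv ℝ (unc f) (x, y, z) (1, 0, 0) := by
    funext x y z; exact pd1_eq (hd (x, y, z)).hasFDerivAt
  have h2 : pd2 f = fun x y z => fderiv ℝ (unc f) (x, y, z) (0, 1, 0) := by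
    funext x y z; exact pd2_eq (hd (x, y, z)).hasFDerivAt
  rw [h1, h2]
  rw [pd1_eq (clairaut_aux hf (0, 1, 0) a b c), pd2_eq (clairaut_aux hf (1, 0, 0) a b c)]
  exact second_sym hf _ _ _

lemma clairaut13 (hf : ContDiff ℝ 2 (unc f)) (a b c : ℝ) :
    pd1 (pd3 f) a b c = pd3 (pd1 f) a b c := by
  have hd : Differentiable ℝ (unc f) := hf.differentiable (by norm_num)
  have h1 : pd1 f = fun x y z => fderiv ℝ (unc f) (x, y, z) (1, 0, 0) := by
    funext x y z; exact pd1_eq (hd (x, y, z)).hasFDerivAt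
  have h3 : pd3 f = fun x y z => fderiv ℝ (unc f) (x, y, z) (0, 0, 1) := by
    funext x y z; exact pd3_eq (hd (x, y, z)).hasFDerivAt
  rw [h1, h3]
  rw [pd1_eq (clairaut_aux hf (0, 0, 1) a b c), pd3_eq (clairaut_aux hf (1, 0, 0) a b c)]
  exact second_sym hf _ _ _

lemma mk_smul (a b c : ℝ) : (⟨0, a, b, c⟩ : Quaternion ℝ) = a • e1 + b • e2 + c • e3 := by
  ext <;> simp [Quaternion.re_smul] <;> simp [e1, e2, e3]

abbrev qmk (a b c d : ℝ) : Quaternion ℝ := ⟨a, b, c, d⟩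

lemma hasDerivAt_quat {f1 f2 f3 : ℝ → ℝ} {d1 d2 d3 : ℝ} {x : ℝ}
    (h1 : HasDerivAt f1 d1 x) (h2 : HasDerivAt f2 d2 x) (h3 : HasDerivAt f3 d3 x) :
    HasDerivAt (fun t => qmk 0 (f1 t) (f2 t) (f3 t)) (qmk 0 d1 d2 d3) x := by
  have he : (fun t => qmk 0 (f1 t) (f2 t) (f3 t))
      = fun t => f1 t • e1 + f2 t • e2 + f3 t • e3 := by
    funext t; exact mk_smul _ _ _
  rw [he, show qmk 0 d1 d2 d3 = d1 • e1 + d2 • e2 + d3 • e3 from mk_smul _ _ _]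
  exact ((h1.smul_const e1).add (h2.smul_const e2)).add (h3.smul_const e3)

end Aux

/-- Quaternionic reformulation of the generalized Ohm's law: with
`E⃗ = −√σ grad u` and `σ⃗ = (grad √σ)/√σ`, one has `div(σ grad u) = 0` iff
`(D + M^σ⃗) E⃗ = 0`. -/
theorem ohm_law_iff_quaternionic
    (u σ : ℝ → ℝ → ℝ → ℝ)
    (hσ : ∀ x₁ x₂ x₃, 0 < σ x₁ x₂ x₃)
    (hu : ContDiff ℝ 2 (fun x : ℝ × ℝ × ℝ => u x.1 x.2.1 x.2.2))
    (hσs : ContDiff ℝ 2 (fun x : ℝ × ℝ × ℝ => σ x.1 x.2.1 x.2.2))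
    (E σv : ℝ → ℝ → ℝ → Quaternion ℝ)
    (hE : E = fun a b c =>
      (⟨0, -(Real.sqrt (σ a b c) * pd1 u a b c),
          -(Real.sqrt (σ a b c) * pd2 u a b c),
          -(Real.sqrt (σ a b c) * pd3 u a b c)⟩ : Quaternion ℝ))
    (hσv : σv = fun a b c =>
      (⟨0, pd1 (fun x y z => Real.sqrt (σ x y z)) a b c / Real.sqrt (σ a b c),
          pd2 (fun x y z => Real.sqrt (σ x y z)) a b c / Real.sqrt (σ a b c),
          pd3 (fun x y z => Real.sqrt (σ x y z)) a b c / Real.sqrt (σ a b c)⟩ : Quaternion ℝ)) :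
    ∀ x₁ x₂ x₃,
      (pd1 (fun a b c => σ a b c * pd1 u a b c) x₁ x₂ x₃
        + pd2 (fun a b c => σ a b c * pd2 u a b c) x₁ x₂ x₃
        + pd3 (fun a b c => σ a b c * pd3 u a b c) x₁ x₂ x₃ = 0)
      ↔ MT E x₁ x₂ x₃ + E x₁ x₂ x₃ * σv x₁ x₂ x₃ = 0 := by
  subst hE hσv
  intro x₁ x₂ x₃
  have hq : ∀ a b c d : ℝ,
      ({ re := a, imI := b, imJ := c, imK := d } : Quaternion ℝ) = qmk a b c d :=
    fun _ _ _ _ => rfl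
  have hW0 : Real.sqrt (σ x₁ x₂ x₃) ≠ 0 := (Real.sqrt_pos.2 (hσ x₁ x₂ x₃)).ne'
  have hS : σ x₁ x₂ x₃ = Real.sqrt (σ x₁ x₂ x₃) ^ 2 := (Real.sq_sqrt (hσ x₁ x₂ x₃).le).symm
  have hu2 : ContDiff ℝ 2 (unc u) := hu
  have hw2 : ContDiff ℝ 2 (unc (fun x y z => Real.sqrt (σ x y z))) :=
    hσs.sqrt (fun p => (hσ p.1 p.2.1 p.2.2).ne')
  have hσd : Differentiable ℝ (unc σ) := hσs.differentiable (by norm_num)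
  have hwd : Differentiable ℝ (unc (fun x y z => Real.sqrt (σ x y z))) :=
    hw2.differentiable (by norm_num)
  have hpu1d : Differentiable ℝ (unc (pd1 u)) := (contDiff_pd1 hu2).differentiable (by norm_num)
  have hpu2d : Differentiable ℝ (unc (pd2 u)) := (contDiff_pd2 hu2).differentiable (by norm_num)
  have hpu3d : Differentiable ℝ (unc (pd3 u)) := (contDiff_pd3 hu2).differentiable (by norm_num)
  have hc12 : pd1 (pd2 u) x₁ x₂ x₃ = pd2 (pd1 u) x₁ x₂ x₃ := clairaut12 hu2 x₁ x₂ x₃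
  have hc13 : pd1 (pd3 u) x₁ x₂ x₃ = pd3 (pd1 u) x₁ x₂ x₃ := clairaut13 hu2 x₁ x₂ x₃
  have hc23 : pd2 (pd3 u) x₁ x₂ x₃ = pd3 (pd2 u) x₁ x₂ x₃ := clairaut23 hu2 x₁ x₂ x₃
  have Hw1 : HasDerivAt (fun t => Real.sqrt (σ t x₂ x₃)) (pd1 (fun x y z => Real.sqrt (σ x y z)) x₁ x₂ x₃) x₁ :=
    hasDerivAt_pd1 (hwd (x₁, x₂, x₃))
  have Hσ1 : HasDerivAt (fun t => σ t x₂ x₃) (pd1 σ x₁ x₂ x₃) x₁ :=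
    hasDerivAt_pd1 (hσd (x₁, x₂, x₃))
  have Hw2 : HasDerivAt (fun t => Real.sqrt (σ x₁ t x₃)) (pd2 (fun x y z => Real.sqrt (σ x y z)) x₁ x₂ x₃) x₂ :=
    hasDerivAt_pd2 (hwd (x₁, x₂, x₃))
  have Hσ2 : HasDerivAt (fun t => σ x₁ t x₃) (pd2 σ x₁ x₂ x₃) x₂ :=
    hasDerivAt_pd2 (hσd (x₁, x₂, x₃))
  have Hw3 : HasDerivAt (fun t => Real.sqrt (σ x₁ x₂ t)) (pd3 (fun x y z => Real.sqrt (σ x y z)) x₁ x₂ x₃) x₃ :=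
    hasDerivAt_pd3 (hwd (x₁, x₂, x₃))
  have Hσ3 : HasDerivAt (fun t => σ x₁ x₂ t) (pd3 σ x₁ x₂ x₃) x₃ :=
    hasDerivAt_pd3 (hσd (x₁, x₂, x₃))
  have Hu11 : HasDerivAt (fun t => pd1 u t x₂ x₃) (pd1 (pd1 u) x₁ x₂ x₃) x₁ :=
    hasDerivAt_pd1 (hpu1d (x₁, x₂, x₃))
  have Hu12 : HasDerivAt (fun t => pd1 u x₁ t x₃) (pd2 (pd1 u) x₁ x₂ x₃) x₂ :=
    hasDerivAt_pd2 (hpu1d (x₁, x₂, x₃))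
  have Hu13 : HasDerivAt (fun t => pd1 u x₁ x₂ t) (pd3 (pd1 u) x₁ x₂ x₃) x₃ :=
    hasDerivAt_pd3 (hpu1d (x₁, x₂, x₃))
  have Hu21 : HasDerivAt (fun t => pd2 u t x₂ x₃) (pd1 (pd2 u) x₁ x₂ x₃) x₁ :=
    hasDerivAt_pd1 (hpu2d (x₁, x₂, x₃))
  have Hu22 : HasDerivAt (fun t => pd2 u x₁ t x₃) (pd2 (pd2 u) x₁ x₂ x₃) x₂ :=
    hasDerivAt_pd2 (hpu2d (x₁, x₂, x₃))
  have Hu23 : HasDerivAt (fun t => pd2 u x₁ x₂ t) (pd3 (pd2 u) x₁ x₂ x₃) x₃ :=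
    hasDerivAt_pd3 (hpu2d (x₁, x₂, x₃))
  have Hu31 : HasDerivAt (fun t => pd3 u t x₂ x₃) (pd1 (pd3 u) x₁ x₂ x₃) x₁ :=
    hasDerivAt_pd1 (hpu3d (x₁, x₂, x₃))
  have Hu32 : HasDerivAt (fun t => pd3 u x₁ t x₃) (pd2 (pd3 u) x₁ x₂ x₃) x₂ :=
    hasDerivAt_pd2 (hpu3d (x₁, x₂, x₃))
  have Hu33 : HasDerivAt (fun t => pd3 u x₁ x₂ t) (pd3 (pd3 u) x₁ x₂ x₃) x₃ :=
    hasDerivAt_pd3 (hpu3d (x₁, x₂, x₃))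
  have hpσ1 : pd1 σ x₁ x₂ x₃ = 2 * Real.sqrt (σ x₁ x₂ x₃) * pd1 (fun x y z => Real.sqrt (σ x y z)) x₁ x₂ x₃ := by
    refine Hσ1.unique ?_
    have h := Hw1.fun_pow 2
    have hfun : (fun t => Real.sqrt (σ t x₂ x₃) ^ 2) = fun t => σ t x₂ x₃ :=
      funext fun t => Real.sq_sqrt (hσ _ _ _).le
    rw [hfun] at h
    refine h.congr_deriv ?_
    push_cast
    ring
  have hpσ2 : pd2 σ x₁ x₂ x₃ = 2 * Real.sqrt (σ x₁ x₂ x₃) * pd2 (fun x y z => Real.sqrt (σ x y z)) x₁ x₂ x₃ := by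
    refine Hσ2.unique ?_
    have h := Hw2.fun_pow 2
    have hfun : (fun t => Real.sqrt (σ x₁ t x₃) ^ 2) = fun t => σ x₁ t x₃ :=
      funext fun t => Real.sq_sqrt (hσ _ _ _).le
    rw [hfun] at h
    refine h.congr_deriv ?_
    push_cast
    ring
  have hpσ3 : pd3 σ x₁ x₂ x₃ = 2 * Real.sqrt (σ x₁ x₂ x₃) * pd3 (fun x y z => Real.sqrt (σ x y z)) x₁ x₂ x₃ := by
    refine Hσ3.unique ?_
    have h := Hw3.fun_pow 2
    have hfun : (fun t => Real.sqrt (σ x₁ x₂ t) ^ 2) = fun t => σ x₁ x₂ t :=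
      funext fun t => Real.sq_sqrt (hσ _ _ _).le
    rw [hfun] at h
    refine h.congr_deriv ?_
    push_cast
    ring
  have hL1 : pd1 (fun a b c => σ a b c * pd1 u a b c) x₁ x₂ x₃
      = pd1 σ x₁ x₂ x₃ * pd1 u x₁ x₂ x₃ + σ x₁ x₂ x₃ * pd1 (pd1 u) x₁ x₂ x₃ := (Hσ1.mul Hu11).deriv
  have hL2 : pd2 (fun a b c => σ a b c * pd2 u a b c) x₁ x₂ x₃
      = pd2 σ x₁ x₂ x₃ * pd2 u x₁ x₂ x₃ + σ x₁ x₂ x₃ * pd2 (pd2 u) x₁ x₂ x₃ := (Hσ2.mul Hu22).deriv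
  have hL3 : pd3 (fun a b c => σ a b c * pd3 u a b c) x₁ x₂ x₃
      = pd3 σ x₁ x₂ x₃ * pd3 u x₁ x₂ x₃ + σ x₁ x₂ x₃ * pd3 (pd3 u) x₁ x₂ x₃ := (Hσ3.mul Hu33).deriv
  have HE1 : HasDerivAt (fun t => qmk 0 (-(Real.sqrt (σ t x₂ x₃) * pd1 u t x₂ x₃)) (-(Real.sqrt (σ t x₂ x₃) * pd2 u t x₂ x₃)) (-(Real.sqrt (σ t x₂ x₃) * pd3 u t x₂ x₃))) (qmk 0 (-(pd1 (fun x y z => Real.sqrt (σ x y z)) x₁ x₂ x₃ * pd1 u x₁ x₂ x₃ + Real.sqrt (σ x₁ x₂ x₃) * pd1 (pd1 u) x₁ x₂ x₃)) (-(pd1 (fun x y z => Real.sqrt (σ x y z)) x₁ x₂ x₃ * pd2 u x₁ x₂ x₃ + Real.sqrt (σ x₁ x₂ x₃) * pd1 (pd2 u) x₁ x₂ x₃)) (-(pd1 (fun x y z => Real.sqrt (σ x y z)) x₁ x₂ x₃ * pd3 u x₁ x₂ x₃ + Real.sqrt (σ x₁ x₂ x₃) * pd1 (pd3 u) x₁ x₂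 x₃))) x₁ :=
    hasDerivAt_quat ((Hw1.mul Hu11).neg) ((Hw1.mul Hu21).neg) ((Hw1.mul Hu31).neg)
  have HE2 : HasDerivAt (fun t => qmk 0 (-(Real.sqrt (σ x₁ t x₃) * pd1 u x₁ t x₃)) (-(Real.sqrt (σ x₁ t x₃) * pd2 u x₁ t x₃)) (-(Real.sqrt (σ x₁ t x₃) * pd3 u x₁ t x₃))) (qmk 0 (-(pd2 (fun x y z => Real.sqrt (σ x y z)) x₁ x₂ x₃ * pd1 u x₁ x₂ x₃ + Real.sqrt (σ x₁ x₂ x₃) * pd2 (pd1 u) x₁ x₂ x₃)) (-(pd2 (fun x y z => Real.sqrt (σ x y z)) x₁ x₂ x₃ * pd2 u x₁ x₂ x₃ + Real.sqrt (σ x₁ x₂ x₃) * pd2 (pd2 u) x₁ x₂ x₃)) (-(pd2 (fun x y z => Real.sqrt (σ x y z)) x₁ x₂ x₃ * pd3 u x₁ x₂ x₃ + Real.sqrt (σ x₁ x₂ x₃) * pd2 (pd3 u) x₁ x₂ x₃))) x₂ :=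
    hasDerivAt_quat ((Hw2.mul Hu12).neg) ((Hw2.mul Hu22).neg) ((Hw2.mul Hu32).neg)
  have HE3 : HasDerivAt (fun t => qmk 0 (-(Real.sqrt (σ x₁ x₂ t) * pd1 u x₁ x₂ t)) (-(Real.sqrt (σ x₁ x₂ t) * pd2 u x₁ x₂ t)) (-(Real.sqrt (σ x₁ x₂ t) * pd3 u x₁ x₂ t))) (qmk 0 (-(pd3 (fun x y z => Real.sqrt (σ x y z)) x₁ x₂ x₃ * pd1 u x₁ x₂ x₃ + Real.sqrt (σ x₁ x₂ x₃) * pd3 (pd1 u) x₁ x₂ x₃)) (-(pd3 (fun x y z => Real.sqrt (σ x y z)) x₁ x₂ x₃ * pd2 u x₁ x₂ x₃ + Real.sqrt (σ x₁ x₂ x₃) * pd3 (pd2 u) x₁ x₂ x₃)) (-(pd3 (fun x y z => Real.sqrt (σ x y z)) x₁ x₂ x₃ * pd3 u x₁ x₂ x₃ + Real.sqrt (σ x₁ x₂ x₃) * pd3 (pd3 u) x₁ x₂ x₃))) x₃ :=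
    hasDerivAt_quat ((Hw3.mul Hu13).neg) ((Hw3.mul Hu23).neg) ((Hw3.mul Hu33).neg)

  have hQ : e1 * qmk 0 (-(pd1 (fun x y z => Real.sqrt (σ x y z)) x₁ x₂ x₃ * pd1 u x₁ x₂ x₃ + Real.sqrt (σ x₁ x₂ x₃) * pd1 (pd1 u) x₁ x₂ x₃)) (-(pd1 (fun x y z => Real.sqrt (σ x y z)) x₁ x₂ x₃ * pd2 u x₁ x₂ x₃ + Real.sqrt (σ x₁ x₂ x₃) * pd1 (pd2 u) x₁ x₂ x₃)) (-(pd1 (fun x y z => Real.sqrt (σ x y z)) x₁ x₂ x₃ * pd3 u x₁ x₂ x₃ + Real.sqrt (σ x₁ x₂ x₃) * pd1 (pd3 u) x₁ x₂ x₃)) + e2 * qmk 0 (-(pd2 (fun x y z => Real.sqrt (σ x y z)) x₁ x₂ x₃ * pd1 u x₁ x₂ x₃ + Real.sqrt (σ x₁ x₂ x₃) * pd2 (pd1 u) x₁ x₂ x₃)) (-(pd2 (fun x y z => Real.sqrt (σ x y z)) x₁ x₂ x₃ * pd2 u x₁ x₂ x₃ + Real.sqrt (σ x₁ x₂ x₃)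 * pd2 (pd2 u) x₁ x₂ x₃)) (-(pd2 (fun x y z => Real.sqrt (σ x y z)) x₁ x₂ x₃ * pd3 u x₁ x₂ x₃ + Real.sqrt (σ x₁ x₂ x₃) * pd2 (pd3 u) x₁ x₂ x₃)) + e3 * qmk 0 (-(pd3 (fun x y z => Real.sqrt (σ x y z)) x₁ x₂ x₃ * pd1 u x₁ x₂ x₃ + Real.sqrt (σ x₁ x₂ x₃) * pd3 (pd1 u) x₁ x₂ x₃)) (-(pd3 (fun x y z => Real.sqrt (σ x y z)) x₁ x₂ x₃ * pd2 u x₁ x₂ x₃ + Real.sqrt (σ x₁ x₂ x₃) * pd3 (pd2 u) x₁ x₂ x₃)) (-(pd3 (fun x y z => Real.sqrt (σ x y z)) x₁ x₂ x₃ * pd3 u x₁ x₂ x₃ + Real.sqrt (σ x₁ x₂ x₃) * pd3 (pd3 u) x₁ x₂ x₃)) + qmk 0 (-(Real.sqrt (σ x₁ x₂ x₃) * pd1 u x₁ x₂ x₃)) (-(Real.sqrt (σ x₁ x₂ x₃) * pd2 u x₁ x₂ x₃)) (-(Real.sqrt (σ x₁ x₂ x₃) * pd3 u x₁ x₂ x₃))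 * qmk 0 (pd1 (fun x y z => Real.sqrt (σ x y z)) x₁ x₂ x₃ / Real.sqrt (σ x₁ x₂ x₃)) (pd2 (fun x y z => Real.sqrt (σ x y z)) x₁ x₂ x₃ / Real.sqrt (σ x₁ x₂ x₃)) (pd3 (fun x y z => Real.sqrt (σ x y z)) x₁ x₂ x₃ / Real.sqrt (σ x₁ x₂ x₃)) = qmk (2 * (pd1 (fun x y z => Real.sqrt (σ x y z)) x₁ x₂ x₃ * pd1 u x₁ x₂ x₃ + pd2 (fun x y z => Real.sqrt (σ x y z)) x₁ x₂ x₃ * pd2 u x₁ x₂ x₃ + pd3 (fun x y z => Real.sqrt (σ x y z)) x₁ x₂ x₃ * pd3 u x₁ x₂ x₃) + Real.sqrt (σ x₁ x₂ x₃) * (pd1 (pd1 u) x₁ x₂ x₃ + pd2 (pd2 u) x₁ x₂ x₃ + pd3 (pd3 u) x₁ x₂ x₃)) 0 0 0 := by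
    apply QuaternionAlgebra.ext <;>
      simp only [Quaternion.re_mul, Quaternion.imI_mul, Quaternion.imJ_mul,
        Quaternion.imK_mul, Quaternion.re_add, Quaternion.imI_add, Quaternion.imJ_add, Quaternion.imK_add] <;> simp only [qmk, e1, e2, e3] <;>
      field_simp <;>
      (try rw [hc12]) <;> (try rw [hc13]) <;> (try rw [hc23]) <;> ring
  simp only [MT, hq]
  rw [HE1.deriv, HE2.deriv, HE3.deriv, hL1, hL2, hL3, hpσ1, hpσ2, hpσ3, hQ]
  have hq0 : (qmk (2 * (pd1 (fun x y z => Real.sqrt (σ x y z)) x₁ x₂ x₃ * pd1 u x₁ x₂ x₃ + pd2 (fun x y z => Real.sqrt (σ x y z)) x₁ x₂ x₃ * pd2 u x₁ x₂ x₃ + pd3 (fun x y z => Real.sqrt (σ x y z)) x₁ x₂ x₃ * pd3 u x₁ x₂ x₃) + Real.sqrt (σ x₁ x₂ x₃) * (pd1 (pd1 u) x₁ x₂ x₃ + pd2 (pd2 u) x₁ x₂ x₃ + pd3 (pd3 u) x₁ x₂ x₃)) 0 0 0 = 0) ↔ (2 * (pd1 (fun x y z => Real.sqrt (σ x y z)) x₁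 x₂ x₃ * pd1 u x₁ x₂ x₃ + pd2 (fun x y z => Real.sqrt (σ x y z)) x₁ x₂ x₃ * pd2 u x₁ x₂ x₃ + pd3 (fun x y z => Real.sqrt (σ x y z)) x₁ x₂ x₃ * pd3 u x₁ x₂ x₃) + Real.sqrt (σ x₁ x₂ x₃) * (pd1 (pd1 u) x₁ x₂ x₃ + pd2 (pd2 u) x₁ x₂ x₃ + pd3 (pd3 u) x₁ x₂ x₃)) = 0 := by
    simp only [qmk]
    exact ⟨fun h => congrArg QuaternionAlgebra.re h, fun h => by rw [h]; rfl⟩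
  rw [hq0]
  have key : 2 * Real.sqrt (σ x₁ x₂ x₃) * pd1 (fun x y z => Real.sqrt (σ x y z)) x₁ x₂ x₃ * pd1 u x₁ x₂ x₃ + σ x₁ x₂ x₃ * pd1 (pd1 u) x₁ x₂ x₃
      + (2 * Real.sqrt (σ x₁ x₂ x₃) * pd2 (fun x y z => Real.sqrt (σ x y z)) x₁ x₂ x₃ * pd2 u x₁ x₂ x₃ + σ x₁ x₂ x₃ * pd2 (pd2 u) x₁ x₂ x₃)
      + (2 * Real.sqrt (σ x₁ x₂ x₃) * pd3 (fun x y z => Real.sqrt (σ x y z)) x₁ x₂ x₃ * pd3 u x₁ x₂ x₃ + σ x₁ x₂ x₃ * pd3 (pd3 u) x₁ x₂ x₃)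
      = Real.sqrt (σ x₁ x₂ x₃) * (2 * (pd1 (fun x y z => Real.sqrt (σ x y z)) x₁ x₂ x₃ * pd1 u x₁ x₂ x₃ + pd2 (fun x y z => Real.sqrt (σ x y z)) x₁ x₂ x₃ * pd2 u x₁ x₂ x₃ + pd3 (fun x y z => Real.sqrt (σ x y z)) x₁ x₂ x₃ * pd3 u x₁ x₂ x₃) + Real.sqrt (σ x₁ x₂ x₃) * (pd1 (pd1 u) x₁ x₂ x₃ + pd2 (pd2 u) x₁ x₂ x₃ + pd3 (pd3 u) x₁ x₂ x₃)) := by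
    linear_combination (pd1 (pd1 u) x₁ x₂ x₃ + pd2 (pd2 u) x₁ x₂ x₃ + pd3 (pd3 u) x₁ x₂ x₃) * hS
  rw [key, mul_eq_zero]
  exact or_iff_right hW0
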